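/- For |t| < 1, the hypergeometric-type integral (1/π) ∫₀¹ dx/√(x(1-x)(1-tx)) equals the power series ∑_{k≥0} C(2k,k)² (t/16)^k. -/

import Mathlib

open Real

lemma cb_le (k : ℕ) : (Nat.centralBinom k : ℝ) ≤ 4 ^ k := by
  have h : Nat.centralBinom k ≤ 4 ^ k := by
    rw [Nat.centralBinom]
    calc (2*k).choose k ≤ ∑ m ∈ Finset.range (2*k+1), (2*k).choose m :=
          Finset.single_le_sum (fun i _ => Nat.zero_le _) (by simp [Nat.lt_succ_iff]; omega)
      _ = 2 ^ (2*k) := Nat.sum_range_choose _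
      _ = 4 ^ k := by rw [pow_mul]; norm_num
  exact_mod_cast h

lemma cb_pos (k : ℕ) : (0:ℝ) < (Nat.centralBinom k : ℝ) / 4 ^ k := by
  apply div_pos _ (by positivity)
  exact_mod_cast Nat.centralBinom_pos k

lemma cb_ratio (k : ℕ) : 2 * ((k:ℝ)+1) * ((Nat.centralBinom (k+1) : ℝ) / 4 ^ (k+1))
    = (2*(k:ℝ)+1) * ((Nat.centralBinom k : ℝ) / 4 ^ k) := by
  have h := Nat.succ_mul_centralBinom_succ k
  have h' : ((k:ℝ)+1) * (Nat.centralBinom (k+1) : ℝ) = 2 * (2*(k:ℝ)+1) * (Nat.centralBinom k : ℝ) := by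
    exact_mod_cast congrArg (Nat.cast : ℕ → ℝ) h
  have h4 : (4:ℝ)^(k+1) = 4 * 4^k := by ring
  rw [h4]
  rw [mul_comm ((k:ℝ)+1)] at h'
  field_simp
  nlinarith [h', pow_pos (show (0:ℝ) < 4 by norm_num) k]

open Real

noncomputable def fcb (u : ℝ) : ℝ := ∑' k : ℕ, (Nat.centralBinom k : ℝ) / 4 ^ k * u ^ k

lemma cb_div_le_one (k : ℕ) : (Nat.centralBinom k : ℝ) / 4 ^ k ≤ 1 := by
  rw [div_le_one (by positivity)]; exact cb_le k

lemma summable_fcb {u : ℝ} (hu : |u| < 1) :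
    Summable (fun k : ℕ => (Nat.centralBinom k : ℝ) / 4 ^ k * u ^ k) := by
  apply Summable.of_norm
  apply Summable.of_nonneg_of_le (fun k => norm_nonneg _) (fun k => ?_)
    (summable_geometric_of_lt_one (abs_nonneg u) hu)
  rw [norm_mul, Real.norm_eq_abs, Real.norm_eq_abs, abs_pow]
  apply mul_le_of_le_one_left (by positivity)
  rw [abs_of_nonneg (cb_pos k).le]
  exact cb_div_le_one k

lemma summable_aux {r : ℝ} (hr0 : 0 ≤ r) (hr : r < 1) :
    Summable (fun k : ℕ => (k : ℝ) * r ^ (k - 1)) := by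
  rw [← summable_nat_add_iff 1]
  have h1 := summable_pow_mul_geometric_of_norm_lt_one (R := ℝ) 1
    (by rwa [Real.norm_eq_abs, abs_of_nonneg hr0])
  have h2 := summable_geometric_of_lt_one hr0 hr
  simpa [add_mul, pow_one] using h1.add h2

lemma summable_dcb {u : ℝ} (hu : |u| < 1) :
    Summable (fun k : ℕ => (Nat.centralBinom k : ℝ) / 4 ^ k * ((k : ℝ) * u ^ (k - 1))) := by
  apply Summable.of_norm
  apply Summable.of_nonneg_of_le (fun k => norm_nonneg _) (fun k => ?_)
    (summable_aux (abs_nonneg u) hu)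
  rw [norm_mul, Real.norm_eq_abs, Real.norm_eq_abs, abs_mul, Nat.abs_cast, abs_pow]
  apply mul_le_of_le_one_left (by positivity)
  rw [abs_of_nonneg (cb_pos k).le]
  exact cb_div_le_one k

noncomputable def dcb (u : ℝ) : ℝ :=
  ∑' k : ℕ, (Nat.centralBinom k : ℝ) / 4 ^ k * ((k : ℝ) * u ^ (k - 1))

lemma hasDerivAt_fcb {u : ℝ} (hu : |u| < 1) : HasDerivAt fcb (dcb u) u := by
  set r := (1 + |u|) / 2 with hr
  have hr0 : 0 < r := by positivity
  have hr1 : r < 1 := by rw [hr]; linarith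
  have hur : |u| < r := by rw [hr]; linarith
  have hmem : u ∈ Metric.ball (0:ℝ) r := by simpa [Metric.mem_ball, Real.dist_eq] using hur
  have h0mem : (0:ℝ) ∈ Metric.ball (0:ℝ) r := by simpa [Metric.mem_ball] using hr0
  exact hasDerivAt_tsum_of_isPreconnected (summable_aux hr0.le hr1)
    Metric.isOpen_ball (convex_ball (0:ℝ) r).isPreconnected
    (fun n y _ => ((hasDerivAt_pow n y).const_mul ((Nat.centralBinom n : ℝ) / 4 ^ n)))
    (fun n y hy => by
      rw [Real.norm_eq_abs, abs_mul, abs_mul, Nat.abs_cast, abs_pow]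
      have hyr : |y| ≤ r := by
        simp only [Metric.mem_ball, Real.dist_eq, sub_zero] at hy; exact hy.le
      calc |(Nat.centralBinom n : ℝ) / 4 ^ n| * ((n:ℝ) * |y| ^ (n-1))
          ≤ 1 * ((n:ℝ) * r ^ (n-1)) := by
            apply mul_le_mul _ _ (by positivity) zero_le_one
            · rw [abs_of_nonneg (cb_pos n).le]; exact cb_div_le_one n
            · exact mul_le_mul_of_nonneg_left (pow_le_pow_left₀ (abs_nonneg y) hyr _)
                (Nat.cast_nonneg n)
        _ = (n:ℝ) * r ^ (n-1) := one_mul _)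
    h0mem (summable_fcb (by simp : |(0:ℝ)| < 1)) hmem

lemma ode_fcb {u : ℝ} (hu : |u| < 1) : 2 * (1 - u) * dcb u = fcb u := by
  have h1 : HasSum (fun k : ℕ => (Nat.centralBinom k : ℝ) / 4 ^ k * u ^ k) (fcb u) :=
    (summable_fcb hu).hasSum
  have hD : HasSum (fun k : ℕ => (Nat.centralBinom k : ℝ) / 4 ^ k * ((k : ℝ) * u ^ (k - 1)))
      (dcb u) := (summable_dcb hu).hasSum
  have hshift : HasSum
      (fun n : ℕ => (Nat.centralBinom (n+1) : ℝ) / 4 ^ (n+1) * (((n:ℝ)+1) * u ^ n)) (dcb u) := by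
    have := (hasSum_nat_add_iff' (f := fun k : ℕ =>
      (Nat.centralBinom k : ℝ) / 4 ^ k * ((k : ℝ) * u ^ (k - 1))) 1).mpr hD
    simpa using this
  have hA := hshift.mul_left 2
  have hB := hD.mul_left (2*u)
  have hC := hA.sub hB
  have hterm : ∀ n : ℕ,
      2 * ((Nat.centralBinom (n+1) : ℝ) / 4 ^ (n+1) * (((n:ℝ)+1) * u ^ n))
        - 2*u * ((Nat.centralBinom n : ℝ) / 4 ^ n * ((n : ℝ) * u ^ (n - 1)))
      = (Nat.centralBinom n : ℝ) / 4 ^ n * u ^ n := by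
    intro n
    have hr := cb_ratio n
    cases n with
    | zero => norm_num [Nat.centralBinom]
    | succ m =>
        rw [Nat.add_sub_cancel]
        push_cast at hr ⊢
        linear_combination u ^ (m+1) * hr
  rw [funext hterm] at hC
  have := h1.unique hC
  rw [this]; ring

lemma fcb_zero : fcb 0 = 1 := by
  unfold fcb
  rw [tsum_eq_single 0 (fun k hk => by simp [zero_pow hk])]
  simp [Nat.centralBinom]

lemma fcb_eq {u : ℝ} (hu : |u| < 1) : fcb u = 1 / Real.sqrt (1 - u) := by
  set g : ℝ → ℝ := fun z => fcb z * Real.sqrt (1 - z) with hg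
  have key : ∀ z ∈ Set.Ioo (-1:ℝ) 1, HasDerivAt g 0 z := by
    intro z hz
    have hz1 : |z| < 1 := abs_lt.mpr ⟨hz.1, hz.2⟩
    have hzpos : (0:ℝ) < 1 - z := by linarith [hz.2]
    have hs : (0:ℝ) < Real.sqrt (1 - z) := Real.sqrt_pos.mpr hzpos
    have hsq : Real.sqrt (1 - z) ^ 2 = 1 - z := Real.sq_sqrt hzpos.le
    have hsqrt : HasDerivAt (fun w => Real.sqrt (1 - w)) (-(1 / (2 * Real.sqrt (1 - z)))) z := by
      have h1 : HasDerivAt (fun w : ℝ => 1 - w) (-1) z := by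
        simpa using ((hasDerivAt_id z).const_sub 1)
      have h2 := (Real.hasDerivAt_sqrt hzpos.ne').comp z h1
      refine h2.congr_deriv ?_
      ring
    have hd := (hasDerivAt_fcb hz1).mul hsqrt
    have hode := ode_fcb hz1
    have hfcb : fcb z = 2 * Real.sqrt (1-z) ^ 2 * dcb z := by
      rw [hsq]; linarith [hode]
    have hss : Real.sqrt (1-z) * Real.sqrt (1-z) = 1 - z := Real.mul_self_sqrt hzpos.le
    have hd' : HasDerivAt g (dcb z * Real.sqrt (1 - z) + fcb z * -(1 / (2 * Real.sqrt (1 - z)))) z := hd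
    convert hd' using 1
    rw [hfcb]
    field_simp
    linear_combination
  have hconst : g u = g 0 := by
    apply (convex_Ioo (-1:ℝ) 1).is_const_of_fderivWithin_eq_zero
      (fun z hz => (key z hz).differentiableAt.differentiableWithinAt)
      (fun z hz => ?_) (abs_lt.mp hu |> fun h => ⟨h.1, h.2⟩) (by norm_num)
    rw [fderivWithin_of_isOpen isOpen_Ioo hz, (key z hz).hasFDerivAt.fderiv]
    ext
    simp
  have hpos : (0:ℝ) < 1 - u := by have := (abs_lt.mp hu).2; linarith
  have hs : Real.sqrt (1 - u) ≠ 0 := (Real.sqrt_pos.mpr hpos).ne'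
  have h1 : fcb u * Real.sqrt (1 - u) = 1 := by simpa [hg, fcb_zero] using hconst
  rw [eq_div_iff hs]
  exact h1

lemma Gamma_nat_add_half (k : ℕ) :
    Real.Gamma ((k : ℝ) + 1/2) = Real.sqrt π * (Nat.factorial (2*k)) / (4 ^ k * (Nat.factorial k)) := by
  induction k with
  | zero => simpa using Real.Gamma_one_half_eq
  | succ m ih =>
      have hne : ((m : ℝ) + 1/2) ≠ 0 := by positivity
      have h1 : ((m : ℝ) + 1) + 1/2 = ((m:ℝ) + 1/2) + 1 := by ring
      rw [Nat.cast_succ, h1, Real.Gamma_add_one hne, ih]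
      have h2 : Nat.factorial (2*(m+1)) = (2*m+2) * ((2*m+1) * Nat.factorial (2*m)) := by
        have he : 2*(m+1) = (2*m+1)+1 := by ring
        rw [he, Nat.factorial_succ, Nat.factorial_succ]
      have h3 : Nat.factorial (m+1) = (m+1) * Nat.factorial m := Nat.factorial_succ m
      rw [h2, h3]
      push_cast
      have h4 : ((4:ℝ))^(m+1) = 4 * 4^m := by ring
      rw [h4]
      field_simp
      ring

lemma beta_eval (k : ℕ) :
    ∫ x in (0:ℝ)..1, x ^ ((k:ℝ) - 1/2) * (1-x) ^ (-(1/2) : ℝ)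
      = π * (Nat.centralBinom k : ℝ) / 4 ^ k := by
  have hs : 0 < Complex.re ((k : ℂ) + 1/2) := by
    simp [Complex.add_re]
    positivity
  have ht : 0 < Complex.re (1/2 : ℂ) := by norm_num
  have hbeta := Complex.Gamma_mul_Gamma_eq_betaIntegral hs ht
  -- identify the complex integral with the real one
  have hcongr : Complex.betaIntegral ((k:ℂ) + 1/2) (1/2)
      = ((∫ x in (0:ℝ)..1, x ^ ((k:ℝ) - 1/2) * (1-x) ^ (-(1/2) : ℝ) : ℝ) : ℂ) := by
    rw [Complex.betaIntegral, ← intervalIntegral.integral_ofReal]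
    apply intervalIntegral.integral_congr
    intro x hx
    rw [Set.uIcc_of_le (by norm_num : (0:ℝ) ≤ 1)] at hx
    dsimp only
    have hx0 : (0:ℝ) ≤ x := hx.1
    have hx1 : (0:ℝ) ≤ 1 - x := by linarith [hx.2]
    have e1 : ((k:ℂ) + 1/2 - 1) = ((((k:ℝ) - 1/2) : ℝ) : ℂ) := by push_cast; ring
    have e2 : ((1:ℂ)/2 - 1) = (((-(1/2) : ℝ)) : ℂ) := by push_cast; ring
    have e3 : ((1:ℂ) - (x:ℂ)) = (((1 - x : ℝ)) : ℂ) := by push_cast; ring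
    rw [e1, e2, e3, ← Complex.ofReal_cpow hx0, ← Complex.ofReal_cpow hx1]
    push_cast
    ring
  have hG1 : Complex.Gamma ((k:ℂ) + 1/2) = (Real.Gamma ((k:ℝ) + 1/2) : ℂ) := by
    rw [← Complex.Gamma_ofReal]
    push_cast
    ring_nf
  have hG2 : Complex.Gamma (1/2 : ℂ) = (Real.Gamma (1/2 : ℝ) : ℂ) := by
    rw [← Complex.Gamma_ofReal]
    push_cast
    ring_nf
  have hG3 : Complex.Gamma ((k:ℂ) + 1/2 + 1/2) = ((Nat.factorial k : ℝ) : ℂ) := by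
    have : (k:ℂ) + 1/2 + 1/2 = (k:ℂ) + 1 := by ring
    rw [this, Complex.Gamma_nat_eq_factorial]
    push_cast
    ring
  rw [hcongr, hG1, hG2, hG3] at hbeta
  have hbr : Real.Gamma ((k:ℝ) + 1/2) * Real.Gamma (1/2)
      = (Nat.factorial k : ℝ) * ∫ x in (0:ℝ)..1, x ^ ((k:ℝ) - 1/2) * (1-x) ^ (-(1/2) : ℝ) := by
    exact_mod_cast hbeta
  have hfact : (0:ℝ) < (Nat.factorial k : ℝ) := by exact_mod_cast Nat.factorial_pos k
  have hGval := _root_.Gamma_nat_add_half k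
  rw [hGval, Real.Gamma_one_half_eq] at hbr
  have hsq : Real.sqrt π * Real.sqrt π = π := Real.mul_self_sqrt Real.pi_pos.le
  have hcb : (Nat.centralBinom k : ℝ) * (Nat.factorial k : ℝ) * (Nat.factorial k : ℝ) = (Nat.factorial (2*k) : ℝ) := by
    have := Nat.choose_mul_factorial_mul_factorial (Nat.le_mul_of_pos_left k (by norm_num) : k ≤ 2*k)
    rw [Nat.centralBinom]
    have h2 : 2*k - k = k := by omega
    rw [← this, h2]
    push_cast
    ring
  have h4 : (0:ℝ) < 4 ^ k := by positivity
  rw [eq_div_iff (ne_of_gt h4)]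
  set I := ∫ x in (0:ℝ)..1, x ^ ((k:ℝ) - 1/2) * (1-x) ^ (-(1/2) : ℝ) with hIdef
  field_simp at hbr
  have key : I * 4 ^ k * ((Nat.factorial k : ℝ) * (Nat.factorial k : ℝ))
      = π * (Nat.centralBinom k : ℝ) * ((Nat.factorial k : ℝ) * (Nat.factorial k : ℝ)) := by
    linear_combination -hbr + (Nat.factorial (2*k) : ℝ) * hsq - π * hcb
  exact mul_right_cancel₀ (by positivity) key

open MeasureTheory in
lemma beta_integrable (k : ℕ) :
    IntegrableOn (fun x : ℝ => x ^ ((k:ℝ) - 1/2) * (1-x) ^ (-(1/2) : ℝ))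
      (Set.Ioo 0 1) volume := by
  have hs : 0 < Complex.re ((k : ℂ) + 1/2) := by
    simp [Complex.add_re]; positivity
  have ht : 0 < Complex.re (1/2 : ℂ) := by norm_num
  have hconv := Complex.betaIntegral_convergent hs ht
  rw [intervalIntegrable_iff_integrableOn_Ioc_of_le (by norm_num : (0:ℝ) ≤ 1)] at hconv
  have hre : IntegrableOn (fun x : ℝ =>
      ((x:ℂ) ^ ((k:ℂ) + 1/2 - 1) * ((1:ℂ)-(x:ℂ)) ^ ((1:ℂ)/2 - 1)).re) (Set.Ioo 0 1) volume :=
    (hconv.mono_set Set.Ioo_subset_Ioc_self).re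
  apply hre.congr_fun _ measurableSet_Ioo
  intro x hx
  dsimp only
  have hx0 : (0:ℝ) ≤ x := hx.1.le
  have hx1 : (0:ℝ) ≤ 1 - x := by linarith [hx.2.le]
  have e1 : ((k:ℂ) + 1/2 - 1) = ((((k:ℝ) - 1/2) : ℝ) : ℂ) := by push_cast; ring
  have e2 : ((1:ℂ)/2 - 1) = (((-(1/2) : ℝ)) : ℂ) := by push_cast; ring
  have e3 : ((1:ℂ) - (x:ℂ)) = (((1 - x : ℝ)) : ℂ) := by push_cast; ring
  rw [e1, e2, e3, ← Complex.ofReal_cpow hx0, ← Complex.ofReal_cpow hx1,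
    ← Complex.ofReal_mul, Complex.ofReal_re]

open MeasureTheory in
lemma beta_Ioo (k : ℕ) :
    ∫ x in Set.Ioo (0:ℝ) 1, x ^ ((k:ℝ) - 1/2) * (1-x) ^ (-(1/2) : ℝ)
      = π * (Nat.centralBinom k : ℝ) / 4 ^ k := by
  rw [← integral_Ioc_eq_integral_Ioo, ← intervalIntegral.integral_of_le zero_le_one]
  exact beta_eval k

theorem legendre_integral_eq_series (t : ℝ) (ht : |t| < 1) :
    (1 / Real.pi) * ∫ x in (0:ℝ)..1, 1 / Real.sqrt (x * (1 - x) * (1 - t * x))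
      = ∑' k : ℕ, ((Nat.choose (2 * k) k : ℝ))^2 * (t / 16)^k := by
  classical
  set F : ℕ → ℝ → ℝ := fun k x =>
    ((Nat.centralBinom k : ℝ) / 4 ^ k * t ^ k) * (x ^ ((k:ℝ) - 1/2) * (1-x) ^ (-(1/2) : ℝ))
    with hF
  have hFint : ∀ k : ℕ, MeasureTheory.Integrable (F k)
      (MeasureTheory.volume.restrict (Set.Ioo (0:ℝ) 1)) := fun k =>
    (beta_integrable k).const_mul _
  -- norm integrals
  have hnormval : ∀ k : ℕ,
      ∫ x in Set.Ioo (0:ℝ) 1, ‖F k x‖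
        = ((Nat.centralBinom k : ℝ) / 4 ^ k * |t| ^ k)
            * (π * (Nat.centralBinom k : ℝ) / 4 ^ k) := by
    intro k
    have heq : Set.EqOn (fun x => ‖F k x‖)
        (fun x => ((Nat.centralBinom k : ℝ) / 4 ^ k * |t| ^ k)
          * (x ^ ((k:ℝ) - 1/2) * (1-x) ^ (-(1/2) : ℝ))) (Set.Ioo 0 1) := by
      intro x hx
      have hx0 : (0:ℝ) < x := hx.1
      have hx1 : (0:ℝ) < 1 - x := by linarith [hx.2]
      simp only [hF, Real.norm_eq_abs, abs_mul]
      rw [abs_of_nonneg (cb_pos k).le, abs_pow,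
        abs_of_nonneg (Real.rpow_nonneg hx0.le _), abs_of_nonneg (Real.rpow_nonneg hx1.le _)]
    rw [MeasureTheory.setIntegral_congr_fun measurableSet_Ioo heq,
      MeasureTheory.integral_const_mul, beta_Ioo k]
  have hFsum : Summable (fun k : ℕ => ∫ x in Set.Ioo (0:ℝ) 1, ‖F k x‖) := by
    apply Summable.of_nonneg_of_le
      (fun k => MeasureTheory.integral_nonneg (fun x => norm_nonneg _))
      (fun k => ?_)
      ((summable_geometric_of_lt_one (abs_nonneg t) ht).mul_left π)
    rw [hnormval k]
    have h1 : (Nat.centralBinom k : ℝ) / 4 ^ k ≤ 1 := cb_div_le_one k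
    have h2 : (0:ℝ) ≤ (Nat.centralBinom k : ℝ) / 4 ^ k := (cb_pos k).le
    have h3 : (0:ℝ) ≤ |t| ^ k := by positivity
    calc ((Nat.centralBinom k : ℝ) / 4 ^ k * |t| ^ k) * (π * (Nat.centralBinom k : ℝ) / 4 ^ k)
        = ((Nat.centralBinom k : ℝ) / 4 ^ k) * ((Nat.centralBinom k : ℝ) / 4 ^ k)
            * (π * |t| ^ k) := by ring
      _ ≤ 1 * 1 * (π * |t| ^ k) := by
          apply mul_le_mul (mul_le_mul h1 h1 h2 zero_le_one) le_rfl
            (by positivity) (by norm_num)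
      _ = π * |t| ^ k := by ring
  -- pointwise identity
  have hpt : Set.EqOn (fun x : ℝ => ∑' k : ℕ, F k x)
      (fun x : ℝ => 1 / Real.sqrt (x * (1 - x) * (1 - t * x))) (Set.Ioo 0 1) := by
    intro x hx
    have hx0 : (0:ℝ) < x := hx.1
    have hx1 : (0:ℝ) < 1 - x := by linarith [hx.2]
    have htx : |t * x| < 1 := by
      rw [abs_mul, abs_of_nonneg hx0.le]
      nlinarith [abs_nonneg t, hx.2, ht]
    have htx1 : (0:ℝ) < 1 - t * x := by
      have := (abs_lt.mp htx).2; linarith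
    have hfs : fcb (t * x) = 1 / Real.sqrt (1 - t * x) := fcb_eq htx
    -- rewrite each term
    have hterm : ∀ k : ℕ, F k x
        = ((Nat.centralBinom k : ℝ) / 4 ^ k * (t*x) ^ k)
            * (x ^ (-(1/2) : ℝ) * (1-x) ^ (-(1/2) : ℝ)) := by
      intro k
      have : x ^ ((k:ℝ) - 1/2) = x ^ k * x ^ (-(1/2) : ℝ) := by
        rw [show ((k:ℝ) - 1/2) = (k:ℝ) + (-(1/2)) by ring, Real.rpow_add hx0,
          Real.rpow_natCast]
      simp only [hF, this, mul_pow]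
      ring
    simp only []
    rw [tsum_congr hterm, tsum_mul_right]
    have : ∑' k : ℕ, (Nat.centralBinom k : ℝ) / 4 ^ k * (t*x) ^ k = fcb (t*x) := rfl
    rw [this, hfs]
    -- algebra with square roots
    have hsx : Real.sqrt (x * (1-x) * (1 - t*x))
        = Real.sqrt x * Real.sqrt (1-x) * Real.sqrt (1-t*x) := by
      rw [Real.sqrt_mul (by positivity), Real.sqrt_mul hx0.le]
    have hrx : x ^ (-(1/2) : ℝ) = 1 / Real.sqrt x := by
      rw [Real.rpow_neg hx0.le, Real.sqrt_eq_rpow]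
      simp [one_div]
    have hrx1 : (1-x) ^ (-(1/2) : ℝ) = 1 / Real.sqrt (1-x) := by
      rw [Real.rpow_neg hx1.le, Real.sqrt_eq_rpow]
      simp [one_div]
    rw [hsx, hrx, hrx1]
    have s1 : Real.sqrt x ≠ 0 := (Real.sqrt_pos.mpr hx0).ne'
    have s2 : Real.sqrt (1-x) ≠ 0 := (Real.sqrt_pos.mpr hx1).ne'
    have s3 : Real.sqrt (1-t*x) ≠ 0 := (Real.sqrt_pos.mpr htx1).ne'
    field_simp
  -- put it together
  have hmain := MeasureTheory.integral_tsum_of_summable_integral_norm hFint hFsum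
  have hLHS : ∫ x in (0:ℝ)..1, 1 / Real.sqrt (x * (1 - x) * (1 - t * x))
      = ∫ x in Set.Ioo (0:ℝ) 1, (∑' k : ℕ, F k x) := by
    rw [intervalIntegral.integral_of_le zero_le_one, MeasureTheory.integral_Ioc_eq_integral_Ioo]
    exact (MeasureTheory.setIntegral_congr_fun measurableSet_Ioo hpt).symm
  have hIval : ∀ k : ℕ, ∫ x in Set.Ioo (0:ℝ) 1, F k x
      = ((Nat.centralBinom k : ℝ) / 4 ^ k * t ^ k) * (π * (Nat.centralBinom k : ℝ) / 4 ^ k) := by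
    intro k
    rw [hF]
    rw [MeasureTheory.integral_const_mul, beta_Ioo k]
  rw [hLHS, ← hmain, tsum_congr hIval]
  rw [← tsum_mul_left]
  apply tsum_congr
  intro k
  have hpi : (π : ℝ) ≠ 0 := Real.pi_ne_zero
  have hcbdef : (Nat.centralBinom k : ℝ) = (Nat.choose (2*k) k : ℝ) := by
    rw [Nat.centralBinom]
  rw [hcbdef]
  have h16 : (16:ℝ)^k = 4^k * 4^k := by
    rw [show (16:ℝ) = 4*4 by norm_num, mul_pow]
  rw [div_pow, h16]
  field_simp
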